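/- A path w*(k,l) in a minimum spanning tree between any two vertices k and l, restricted to any subpath between vertices a, b on it, is itself a minimax path: the maximum edge cost along the tree path from a to b equals the minimum over all paths from a to b in the graph of the maximum edge cost. -/

import Mathlib

open SimpleGraph

/-- A minimum spanning tree of a weighted graph. -/
def IsMST {V : Type*} (G : SimpleGraph V) (c : Sym2 V → ℝ) (T : SimpleGraph V) : Prop :=
  T.IsTree ∧ T ≤ G ∧
    ∀ T' : SimpleGraph V, T'.IsTree → T' ≤ G →
      (∑ᶠ e ∈ T.edgeSet, c e) ≤ ∑ᶠ e ∈ T'.edgeSet, c e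


section Aux

variable {V : Type*}

/-- Every vertex connected (in `T`) to `u` can reach `u` or `v` after deleting the edge. -/
private lemma mst_aux_toSide {T : SimpleGraph V} {u v : V} :
    ∀ {a t : V}, T.Walk a t → t = u →
      (T.deleteEdges {s(u, v)}).Reachable a u ∨ (T.deleteEdges {s(u, v)}).Reachable a v := by
  intro a t p
  induction p with
  | nil => rintro rfl; exact Or.inl (Reachable.refl _)
  | @cons a z _ h w ih =>
    intro ht
    by_cases he : s(a, z) = s(u, v)
    · rw [Sym2.eq_iff] at he
      rcases he with ⟨rfl, rfl⟩ | ⟨rfl, rfl⟩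
      · exact Or.inl (Reachable.refl _)
      · exact Or.inr (Reachable.refl _)
    · have hadj : (T.deleteEdges {s(u, v)}).Adj a z := by
        rw [deleteEdges_adj]
        exact ⟨h, by simpa using he⟩
      rcases ih ht with h1 | h1
      · exact Or.inl (hadj.reachable.trans h1)
      · exact Or.inr (hadj.reachable.trans h1)

/-- Deleting an edge of a path in an acyclic graph disconnects the path's endpoints. -/
private lemma mst_aux_sep {T : SimpleGraph V} (hac : T.IsAcyclic) :
    ∀ {a b : V} (q : T.Walk a b), q.IsPath → ∀ e ∈ q.edges,
      ¬ (T.deleteEdges {e}).Reachable a b := by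
  intro a b q
  induction q with
  | nil => simp
  | @cons a z b h w ih =>
    intro hp e he
    rw [Walk.edges_cons, List.mem_cons] at he
    rw [Walk.cons_isPath_iff] at hp
    by_cases hfirst : e = s(a, z)
    · subst hfirst
      have hbr : ¬ (T.deleteEdges {s(a, z)}).Reachable a z := by
        have := (isAcyclic_iff_forall_adj_isBridge.1 hac h)
        exact this
      have hnw : ∀ e' ∈ w.edges, e' ∉ ({s(a, z)} : Set (Sym2 V)) := by
        intro e' he' hmem
        rw [Set.mem_singleton_iff] at hmem
        subst hmem
        exact hp.2 (w.fst_mem_support_of_mem_edges he')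
      have hreach : (T.deleteEdges {s(a, z)}).Reachable z b := ⟨w.toDeleteEdges _ hnw⟩
      intro hr
      exact hbr (hr.trans hreach.symm)
    · have hwe : e ∈ w.edges := by tauto
      have hadj : (T.deleteEdges {e}).Adj a z := by
        rw [deleteEdges_adj]
        exact ⟨h, by simpa using fun hh => hfirst hh.symm⟩
      intro hr
      exact ih hp.1 e hwe (hadj.reachable.symm.trans hr)

/-- A walk between vertices in different components crosses the cut. -/
private lemma mst_aux_cross {G T' : SimpleGraph V} :
    ∀ {a b : V} (r : G.Walk a b), ¬ T'.Reachable a b →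
      ∃ x y : V, s(x, y) ∈ r.edges ∧ T'.Reachable a x ∧ ¬ T'.Reachable a y := by
  intro a b r
  induction r with
  | nil => intro hn; exact absurd (Reachable.refl _) hn
  | @cons a z b h w ih =>
    intro hn
    by_cases hz : T'.Reachable a z
    · have hzb : ¬ T'.Reachable z b := fun hh => hn (hz.trans hh)
      obtain ⟨x, y, hmem, hx, hy⟩ := ih hzb
      exact ⟨x, y, by simp [hmem], hz.trans hx, fun hh => hy (hz.symm.trans hh)⟩
    · exact ⟨a, z, by simp, Reachable.refl _, hz⟩

/-- The MST exchange argument: an MST edge is no more expensive than any graph edge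
crossing the cut it induces. -/
private lemma mst_aux_exchange [Fintype V] {G T : SimpleGraph V} {c : Sym2 V → ℝ}
    (hT : IsMST G c T) {u v x y : V} (huv : T.Adj u v) (hxy : G.Adj x y)
    (hx : (T.deleteEdges {s(u, v)}).Reachable u x)
    (hy : (T.deleteEdges {s(u, v)}).Reachable v y) :
    c s(u, v) ≤ c s(x, y) := by
  classical
  obtain ⟨htree, hle, hmin⟩ := hT
  by_cases heq : s(x, y) = s(u, v)
  · rw [heq]
  set T' : SimpleGraph V := T.deleteEdges {s(u, v)} with hT'
  have hbr : ¬ T'.Reachable u v := by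
    have := (isAcyclic_iff_forall_adj_isBridge.1 htree.2 huv)
    exact this
  have hxyne : ¬ T'.Reachable x y := fun hh =>
    hbr (hx.trans (hh.trans hy.symm))
  have hfnot : s(x, y) ∉ T.edgeSet := by
    intro hmem
    have hadj : T'.Adj x y := by
      rw [deleteEdges_adj]
      exact ⟨hmem, by simpa using heq⟩
    exact hxyne hadj.reachable
  set T'' : SimpleGraph V := T' ⊔ fromEdgeSet {s(x, y)} with hT''
  have hT'le : T' ≤ T'' := le_sup_left
  have hadjxy : T''.Adj x y := by
    rw [hT'', sup_adj, fromEdgeSet_adj]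
    exact Or.inr ⟨rfl, hxy.ne⟩
  -- every vertex reaches x in T''
  have hall : ∀ w : V, T''.Reachable w x := by
    intro w
    obtain ⟨p⟩ := htree.1.preconnected w u
    rcases mst_aux_toSide (v := v) p rfl with h1 | h1
    · exact (h1.mono hT'le).trans ((hx.mono hT'le))
    · exact ((h1.mono hT'le).trans (hy.mono hT'le)).trans hadjxy.symm.reachable
  have hconn : T''.Connected := by
    rw [connected_iff]
    exact ⟨fun w1 w2 => (hall w1).trans (hall w2).symm, ⟨u⟩⟩
  -- T'' is acyclic
  have hacy : T''.IsAcyclic := by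
    intro w cyc hcyc
    by_cases hf : s(x, y) ∈ cyc.edges
    · have : T''.Adj x y ∧ (T'' \ fromEdgeSet {s(x, y)}).Reachable x y :=
        (adj_and_reachable_delete_edges_iff_exists_cycle).2 ⟨w, cyc, hcyc, hf⟩
      have hle2 : (T'' \ fromEdgeSet {s(x, y)}) ≤ T' := by
        intro a b hab
        rcases hab with ⟨hab1, hab2⟩
        rw [sup_adj] at hab1
        rcases hab1 with h1 | h1
        · exact h1
        · exact absurd h1 hab2
      exact hxyne (this.2.mono hle2)
    · have hsub : ∀ e ∈ cyc.edges, e ∈ T.edgeSet := by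
        intro e he
        have := cyc.edges_subset_edgeSet he
        rw [hT'', edgeSet_sup, hT', edgeSet_deleteEdges, edgeSet_fromEdgeSet] at this
        rcases this with h1 | h1
        · exact h1.1
        · exact absurd h1.1 (by rintro rfl; exact hf he)
      exact htree.2 (cyc.transfer T hsub) (hcyc.transfer hsub)
  have htree'' : T''.IsTree := ⟨hconn, hacy⟩
  have hle'' : T'' ≤ G := by
    apply sup_le ((deleteEdges_le _).trans hle)
    intro a b hab
    rw [fromEdgeSet_adj, Set.mem_singleton_iff, Sym2.eq_iff] at hab
    rcases hab.1 with ⟨rfl, rfl⟩ | ⟨rfl, rfl⟩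
    · exact hxy
    · exact hxy.symm
  -- edge set computation
  have heuv : s(u, v) ∈ T.edgeSet := huv
  have hES : T''.edgeSet = (T.edgeSet \ {s(u, v)}) ∪ {s(x, y)} := by
    rw [hT'', edgeSet_sup, hT', edgeSet_deleteEdges, edgeSet_fromEdgeSet]
    congr 1
    ext e
    simp only [Set.mem_diff, Set.mem_singleton_iff, Set.mem_setOf_eq]
    constructor
    · exact fun h => h.1
    · rintro rfl
      exact ⟨rfl, by simp [Sym2.mk_isDiag_iff, hxy.ne]⟩
  have hfin : (T.edgeSet \ {s(u, v)}).Finite := Set.toFinite _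
  have hdisj1 : Disjoint (T.edgeSet \ {s(u, v)}) ({s(x, y)} : Set (Sym2 V)) :=
    Set.disjoint_singleton_right.2 (fun hh => hfnot hh.1)
  have hdisj2 : Disjoint (T.edgeSet \ {s(u, v)}) ({s(u, v)} : Set (Sym2 V)) :=
    Set.disjoint_singleton_right.2 (fun hh => hh.2 rfl)
  have h1 : ∑ᶠ e ∈ T.edgeSet, c e = (∑ᶠ e ∈ T.edgeSet \ {s(u, v)}, c e) + c s(u, v) := by
    rw [← finsum_mem_singleton (a := s(u, v)) (f := c),
      ← finsum_mem_union hdisj2 hfin (Set.finite_singleton _),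
      Set.diff_union_of_subset (Set.singleton_subset_iff.2 heuv)]
  have h2 : ∑ᶠ e ∈ T''.edgeSet, c e = (∑ᶠ e ∈ T.edgeSet \ {s(u, v)}, c e) + c s(x, y) := by
    rw [hES, finsum_mem_union hdisj1 hfin (Set.finite_singleton _), finsum_mem_singleton]
  have := hmin T'' htree'' hle''
  rw [h1, h2] at this
  linarith

end Aux

/-- any subpath of a minimum-spanning-tree path is itself minimax: if `p` is
the tree path between `k` and `l` and `a`, `b` lie on `p`, then the maximum edge cost along
the tree path `q` from `a` to `b` equals the minimum over all `G`-paths from `a` to `b` of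
the maximum edge cost along the path. -/
theorem mst_subpath_minimax {V : Type*} [Fintype V]
    (G T : SimpleGraph V) (c : Sym2 V → ℝ)
    (hG : G.Connected) (hT : IsMST G c T) (k l : V)
    (p : T.Walk k l) (hp : p.IsPath) (a b : V)
    (ha : a ∈ p.support) (hb : b ∈ p.support)
    (q : T.Walk a b) (hq : q.IsPath) :
    IsLeast {m : WithBot ℝ | ∃ r : G.Walk a b, r.IsPath ∧ (r.edges.map c).maximum = m}
      ((q.edges.map c).maximum) := by
  obtain ⟨htree, hle, hmin⟩ := hT
  constructor
  · refine ⟨q.transfer G (fun e he => edgeSet_subset_edgeSet.2 hle (q.edges_subset_edgeSet he)),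
      hq.transfer _, ?_⟩
    rw [q.edges_transfer]
  · rintro m ⟨r, hr, rfl⟩
    apply List.maximum_le_of_forall_le
    intro ce hce
    obtain ⟨e, he, rfl⟩ := List.mem_map.1 hce
    revert he
    induction e using Sym2.ind with
    | _ u v =>
      intro he
      have huv : T.Adj u v := q.edges_subset_edgeSet he
      have hsep : ¬ (T.deleteEdges {s(u, v)}).Reachable a b :=
        mst_aux_sep htree.2 q hq _ he
      obtain ⟨x, y, hmem, hax, hnay⟩ := mst_aux_cross r hsep
      have hxy : G.Adj x y := r.edges_subset_edgeSet hmem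
      have hkey : c s(u, v) ≤ c s(x, y) := by
        obtain ⟨pa⟩ := htree.1.preconnected a u
        rcases mst_aux_toSide (v := v) pa rfl with hau | hav
        · -- a on the u side
          have hux : (T.deleteEdges {s(u, v)}).Reachable u x := hau.symm.trans hax
          have hvy : (T.deleteEdges {s(u, v)}).Reachable v y := by
            obtain ⟨py⟩ := htree.1.preconnected y u
            rcases mst_aux_toSide (v := v) py rfl with hyu | hyv
            · exact absurd (hau.trans hyu.symm) hnay
            · exact hyv.symm
          exact mst_aux_exchange ⟨htree, hle, hmin⟩ huv hxy hux hvy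
        · -- a on the v side
          have hav' : (T.deleteEdges {s(v, u)}).Reachable a v := by
            rwa [Sym2.eq_swap] at hav
          have hvx : (T.deleteEdges {s(v, u)}).Reachable v x := by
            rw [Sym2.eq_swap]; exact hav.symm.trans hax
          have huy : (T.deleteEdges {s(v, u)}).Reachable u y := by
            rw [Sym2.eq_swap]
            obtain ⟨py⟩ := htree.1.preconnected y u
            rcases mst_aux_toSide (v := v) py rfl with hyu | hyv
            · exact hyu.symm
            · exact absurd (hav.trans hyv.symm) hnay
          have := mst_aux_exchange ⟨htree, hle, hmin⟩ huv.symm hxy hvx huy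
          rwa [Sym2.eq_swap] at this
      calc (↑(c s(u, v)) : WithBot ℝ) ≤ ↑(c s(x, y)) := WithBot.coe_le_coe.2 hkey
        _ ≤ (r.edges.map c).maximum :=
          List.le_maximum_of_mem' (List.mem_map.2 ⟨_, hmem, rfl⟩)
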